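/- Let H₁ and H₂ be 2-dimensional complex Hilbert spaces and v ∈ H₁ ⊗ H₂ a unit vector. Then v is entangled (i.e. v is not of the form x ⊗ y) if and only if neither reduced density operator of v has 0 as an eigenvalue, i.e. (P_u ⊗ I)v ≠ 0 for every nonzero u ∈ H₁ and (I ⊗ P_w)v ≠ 0 for every nonzero w ∈ H₂ (where P_u, P_w are the orthogonal projections onto the spans of u and w). Consequently, every entangled unit vector of two 2-dimensional factors is hyperentangled. -/

import Mathlib

open scoped InnerProductSpace

noncomputable section

/-- The (completed) Hilbert tensor product of two complex Hilbert spaces `H₁`, `H₂`,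
presented as a Hilbert space `H` together with a bilinear map `tmul` (elementary tensors)
whose inner products multiply, whose elementary tensors span a dense subspace, and together
with the tensor product `map A B = A ⊗ B` of bounded operators. -/
structure HilbertTensor (H₁ H₂ H : Type*)
    [NormedAddCommGroup H₁] [InnerProductSpace ℂ H₁] [CompleteSpace H₁]
    [NormedAddCommGroup H₂] [InnerProductSpace ℂ H₂] [CompleteSpace H₂]
    [NormedAddCommGroup H] [InnerProductSpace ℂ H] [CompleteSpace H] where
  tmul : H₁ →ₗ[ℂ] H₂ →ₗ[ℂ] H
  inner_tmul : ∀ x₁ y₁ x₂ y₂, ⟪tmul x₁ y₁, tmul x₂ y₂⟫_ℂ = ⟪x₁, x₂⟫_ℂ * ⟪y₁, y₂⟫_ℂ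
  dense_span : Dense (↑(Submodule.span ℂ {z : H | ∃ x y, z = tmul x y}) : Set H)
  map : (H₁ →L[ℂ] H₁) → (H₂ →L[ℂ] H₂) → (H →L[ℂ] H)
  map_tmul : ∀ A B x y, map A B (tmul x y) = tmul (A x) (B y)

variable {H₁ H₂ H : Type*}
  [NormedAddCommGroup H₁] [InnerProductSpace ℂ H₁] [CompleteSpace H₁]
  [NormedAddCommGroup H₂] [InnerProductSpace ℂ H₂] [CompleteSpace H₂]
  [NormedAddCommGroup H] [InnerProductSpace ℂ H] [CompleteSpace H]

/-- `v` is cyclic for the first factor: `{(A ⊗ I) v : A bounded on H₁}` is dense in `H`. -/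
def HilbertTensor.CyclicFst (T : HilbertTensor H₁ H₂ H) (v : H) : Prop :=
  Dense (Set.range fun A : H₁ →L[ℂ] H₁ => T.map A 1 v)

/-- An orthogonal projection on a Hilbert space: a self-adjoint idempotent bounded operator. -/
def IsONProj {E : Type*} [NormedAddCommGroup E] [InnerProductSpace ℂ E] [CompleteSpace E]
    (P : E →L[ℂ] E) : Prop :=
  IsSelfAdjoint P ∧ P ∘L P = P

/-- The algebra of the second factor is maximally correlated with the algebra of the first
factor in the state `v`. -/
def HilbertTensor.MaxCorrSndFst (T : HilbertTensor H₁ H₂ H) (v : H) : Prop :=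
  ∀ P' : H₂ →L[ℂ] H₂, IsONProj P' → P' ≠ 0 → ∀ ε : ℝ, 0 < ε →
    ∃ P : H₁ →L[ℂ] H₁, IsONProj P ∧ P ≠ 0 ∧
      0 < (⟪v, T.map P 1 v⟫_ℂ).re ∧
      (1 - ε) * (⟪v, T.map P 1 v⟫_ℂ).re ≤ (⟪v, T.map P P' v⟫_ℂ).re

/-- The orthogonal projection onto the span of a vector, as an operator `E →L[ℂ] E`. -/
def projSpan {E : Type*} [NormedAddCommGroup E] [InnerProductSpace ℂ E] [CompleteSpace E]
    (w : E) : E →L[ℂ] E :=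
  (ℂ ∙ w).subtypeL ∘L Submodule.orthogonalProjectionOnto (ℂ ∙ w)

/-- The algebra of the first factor is maximally correlated with the algebra of the second
factor in the state `v`. -/
def HilbertTensor.MaxCorrFstSnd (T : HilbertTensor H₁ H₂ H) (v : H) : Prop :=
  ∀ P : H₁ →L[ℂ] H₁, IsONProj P → P ≠ 0 → ∀ ε : ℝ, 0 < ε →
    ∃ P' : H₂ →L[ℂ] H₂, IsONProj P' ∧ P' ≠ 0 ∧
      0 < (⟪v, T.map 1 P' v⟫_ℂ).re ∧
      (1 - ε) * (⟪v, T.map 1 P' v⟫_ℂ).re ≤ (⟪v, T.map P P' v⟫_ℂ).re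

/-- A unit vector of a two-factor tensor product is hyperentangled when the algebra of each
factor is maximally correlated with the algebra of the other factor in it. -/
def HilbertTensor.Hyper₂ (T : HilbertTensor H₁ H₂ H) (v : H) : Prop :=
  T.MaxCorrSndFst v ∧ T.MaxCorrFstSnd v

section Aux

variable {E : Type*} [NormedAddCommGroup E] [InnerProductSpace ℂ E] [CompleteSpace E]

lemma projSpan_isONProj (w : E) : IsONProj (projSpan w) := by
  refine ⟨isSelfAdjoint_starProjection _, ?_⟩
  ext x
  simp [projSpan, ContinuousLinearMap.comp_apply, Submodule.orthogonalProjectionOnto_mem_subspace_eq_self]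
  exact Submodule.starProjection_eq_self_iff.2 (Submodule.starProjection_apply_mem _ x)

lemma projSpan_apply (u x : E) :
    projSpan u x = (⟪u, x⟫_ℂ / ((‖u‖ ^ 2 : ℝ) : ℂ)) • u := by
  exact Submodule.starProjection_singleton ℂ x

lemma projSpan_self (w : E) : projSpan w w = w := by
  exact Submodule.starProjection_eq_self_iff.2 (Submodule.mem_span_singleton_self w)

lemma projSpan_ne_zero {u : E} (hu : u ≠ 0) : projSpan u ≠ 0 := by
  intro h
  have h2 := projSpan_self u
  rw [h] at h2
  simp only [ContinuousLinearMap.zero_apply] at h2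
  exact hu h2.symm

lemma projSpan_eq_zero {u : E} (x : E) (h : ⟪u, x⟫_ℂ = 0) : projSpan u x = 0 := by
  rw [projSpan_apply, h]; simp

lemma projSpan_eq_zero_iff {u : E} (hu : u ≠ 0) (x : E) :
    projSpan u x = 0 ↔ ⟪u, x⟫_ℂ = 0 := by
  refine ⟨fun h => ?_, projSpan_eq_zero x⟩
  rw [projSpan_apply] at h
  rcases smul_eq_zero.mp h with h | h
  · rcases div_eq_zero_iff.mp h with h | h
    · exact h
    · exact absurd h (by simpa using norm_ne_zero_iff.mpr hu)
  · exact absurd h hu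

lemma exists_inner_eq_zero (hE : Module.finrank ℂ E = 2) (b : E) :
    ∃ u : E, u ≠ 0 ∧ ⟪u, b⟫_ℂ = 0 := by
  haveI : FiniteDimensional ℂ E := .of_finrank_eq_succ hE
  have hK : Module.finrank ℂ ↥(ℂ ∙ b) ≤ 1 := by
    by_cases hb : b = 0
    · subst hb
      rw [Submodule.span_zero_singleton]
      simp
    · rw [finrank_span_singleton hb]
  have hsum := Submodule.finrank_add_finrank_orthogonal (K := (ℂ ∙ b))
  rw [hE] at hsum
  have hpos : 0 < Module.finrank ℂ ↥(ℂ ∙ b)ᗮ := by omega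
  obtain ⟨x, hx⟩ := Module.finrank_pos_iff_exists_ne_zero.mp hpos
  refine ⟨(x : E), by simpa using hx, ?_⟩
  have hmem := x.2
  rw [Submodule.mem_orthogonal] at hmem
  have hb0 := hmem b (Submodule.mem_span_singleton_self b)
  rw [inner_eq_zero_symm] at hb0
  exact hb0

lemma orthonormal_pair {a u : E} (ha : a ≠ 0) (hu : u ≠ 0) (hau : ⟪a, u⟫_ℂ = 0) :
    Orthonormal ℂ ![(‖a‖ : ℂ)⁻¹ • a, (‖u‖ : ℂ)⁻¹ • u] := by
  have hua : ⟪u, a⟫_ℂ = 0 := inner_eq_zero_symm.mp hau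
  have hnorm : ∀ x : E, x ≠ 0 → ‖((‖x‖ : ℝ) : ℂ)⁻¹ • x‖ = 1 := by
    intro x hx
    have hx' : ‖x‖ ≠ 0 := norm_ne_zero_iff.mpr hx
    rw [norm_smul, norm_inv]
    simp only [Complex.norm_real, norm_norm]
    exact inv_mul_cancel₀ hx'
  rw [orthonormal_iff_ite]
  intro i j
  fin_cases i <;> fin_cases j
  · simp only [Fin.zero_eta, Fin.mk_one, Matrix.cons_val_zero]
    rw [inner_self_eq_norm_sq_to_K, hnorm a ha]
    norm_num
  · simp [Matrix.cons_val_zero, Matrix.cons_val_one, Matrix.head_cons,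
      inner_smul_left, inner_smul_right, hau]
  · simp [Matrix.cons_val_zero, Matrix.cons_val_one, Matrix.head_cons,
      inner_smul_left, inner_smul_right, hua]
  · simp only [Fin.zero_eta, Fin.mk_one, Matrix.cons_val_one, Matrix.head_cons, Matrix.cons_val_zero]
    rw [inner_self_eq_norm_sq_to_K, hnorm u hu]
    norm_num

lemma spanning_of_orthonormal (hE : Module.finrank ℂ E = 2) {f : Fin 2 → E}
    (hf : Orthonormal ℂ f) (y : E) : ∃ c d : ℂ, y = c • f 0 + d • f 1 := by
  haveI : FiniteDimensional ℂ E := .of_finrank_eq_succ hE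
  have hcard : Fintype.card (Fin 2) = Module.finrank ℂ E := by simp [hE]
  have hB : ⇑(basisOfLinearIndependentOfCardEqFinrank hf.linearIndependent hcard) = f :=
    coe_basisOfLinearIndependentOfCardEqFinrank _ _
  have hy : y ∈ Submodule.span ℂ (Set.range f) := by
    rw [← hB, (basisOfLinearIndependentOfCardEqFinrank hf.linearIndependent hcard).span_eq]
    trivial
  have hrange : Set.range f = {f 0, f 1} := by
    ext z
    constructor
    · rintro ⟨i, rfl⟩
      fin_cases i <;> simp
    · rintro (h | h) <;> [exact ⟨0, h.symm⟩; exact ⟨1, h.symm⟩]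
  rw [hrange] at hy
  obtain ⟨c, d, hcd⟩ := Submodule.mem_span_pair.mp hy
  exact ⟨c, d, hcd.symm⟩

lemma dep_of_inner_eq_zero (hE : Module.finrank ℂ E = 2) {u a b : E} (hu : u ≠ 0)
    (ha : ⟪u, a⟫_ℂ = 0) (hb : ⟪u, b⟫_ℂ = 0) : ∃ c : ℂ, b = c • a ∨ a = c • b := by
  by_cases h0 : a = 0
  · exact ⟨0, Or.inr (by simp [h0])⟩
  have hau : ⟪a, u⟫_ℂ = 0 := inner_eq_zero_symm.mp ha
  obtain ⟨c, d, hy⟩ := spanning_of_orthonormal hE (orthonormal_pair h0 hu hau) b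
  simp only [Matrix.cons_val_zero, Matrix.cons_val_one, Matrix.head_cons] at hy
  have hu' : (‖u‖ : ℝ) ≠ 0 := norm_ne_zero_iff.mpr hu
  have hd : d = 0 := by
    have h2 : ⟪u, b⟫_ℂ = d * (‖u‖ : ℂ) := by
      rw [hy, inner_add_right, inner_smul_right, inner_smul_right, inner_smul_right,
        inner_smul_right, ha, inner_self_eq_norm_sq_to_K]
      have hU : ((‖u‖ : ℝ) : ℂ) ≠ 0 := by exact_mod_cast hu'
      push_cast
      field_simp
      simp
    rw [hb] at h2
    rcases mul_eq_zero.mp h2.symm with h | h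
    · exact h
    · exact absurd h (by exact_mod_cast hu')
  refine ⟨c * (‖a‖ : ℂ)⁻¹, Or.inl ?_⟩
  rw [hy, hd]
  simp [smul_smul]

end Aux

section TensorAux

variable {H₁ H₂ H : Type*}
  [NormedAddCommGroup H₁] [InnerProductSpace ℂ H₁] [CompleteSpace H₁]
  [NormedAddCommGroup H₂] [InnerProductSpace ℂ H₂] [CompleteSpace H₂]
  [NormedAddCommGroup H] [InnerProductSpace ℂ H] [CompleteSpace H]

/-- The flipped Hilbert tensor structure. -/
def HilbertTensor.flip (T : HilbertTensor H₁ H₂ H) : HilbertTensor H₂ H₁ H where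
  tmul := T.tmul.flip
  inner_tmul := fun x₁ y₁ x₂ y₂ => by
    simp only [LinearMap.flip_apply]
    rw [T.inner_tmul]; ring
  dense_span := by
    have h : {z : H | ∃ x y, z = T.tmul.flip x y} = {z : H | ∃ x y, z = T.tmul x y} := by
      ext z
      constructor
      · rintro ⟨x, y, rfl⟩; exact ⟨y, x, rfl⟩
      · rintro ⟨x, y, rfl⟩; exact ⟨y, x, rfl⟩
    rw [h]
    exact T.dense_span
  map A B := T.map B A
  map_tmul := fun A B x y => T.map_tmul B A y x

lemma HilbertTensor.exists_decomp (T : HilbertTensor H₁ H₂ H)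
    [FiniteDimensional ℂ H₁] {f : Fin 2 → H₂}
    (hspan : ∀ y : H₂, ∃ c d : ℂ, y = c • f 0 + d • f 1) (v : H) :
    ∃ a b : H₁, v = T.tmul a (f 0) + T.tmul b (f 1) := by
  set L : H₁ × H₁ →ₗ[ℂ] H := (T.tmul.flip (f 0)).coprod (T.tmul.flip (f 1)) with hL
  have hsub : (↑(Submodule.span ℂ {z : H | ∃ x y, z = T.tmul x y}) : Set H) ⊆
      (LinearMap.range L : Set H) := by
    intro z hz
    refine Submodule.span_le.mpr ?_ hz
    rintro w ⟨x, y, rfl⟩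
    obtain ⟨c, d, rfl⟩ := hspan y
    refine ⟨(c • x, d • x), ?_⟩
    simp [hL, LinearMap.coprod_apply, LinearMap.flip_apply, map_add, map_smul,
      LinearMap.smul_apply, LinearMap.add_apply]
  have hclosed : IsClosed (LinearMap.range L : Set H) :=
    (LinearMap.range L).closed_of_finiteDimensional
  have hdense : Dense (LinearMap.range L : Set H) := T.dense_span.mono hsub
  have huniv : (LinearMap.range L : Set H) = Set.univ := by
    rw [← hclosed.closure_eq, hdense.closure_eq]
  have hv : v ∈ LinearMap.range L := by
    rw [← SetLike.mem_coe, huniv]; trivial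
  obtain ⟨⟨a, b⟩, hab⟩ := hv
  refine ⟨a, b, ?_⟩
  simpa [hL, LinearMap.coprod_apply, LinearMap.flip_apply] using hab.symm

lemma HilbertTensor.inner_decomp (T : HilbertTensor H₁ H₂ H) {f : Fin 2 → H₂}
    (hf : Orthonormal ℂ f) (a b : H₁) (u : H₁) :
    ⟪T.tmul u (f 0), T.tmul a (f 0) + T.tmul b (f 1)⟫_ℂ = ⟪u, a⟫_ℂ ∧
    ⟪T.tmul u (f 1), T.tmul a (f 0) + T.tmul b (f 1)⟫_ℂ = ⟪u, b⟫_ℂ := by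
  rw [orthonormal_iff_ite] at hf
  constructor <;>
  · rw [inner_add_right, T.inner_tmul, T.inner_tmul, hf, hf]
    simp

lemma HilbertTensor.decomp_unique (T : HilbertTensor H₁ H₂ H) {f : Fin 2 → H₂}
    (hf : Orthonormal ℂ f) {a b a' b' : H₁}
    (h : T.tmul a (f 0) + T.tmul b (f 1) = T.tmul a' (f 0) + T.tmul b' (f 1)) :
    a = a' ∧ b = b' := by
  constructor
  · refine ext_inner_left ℂ fun u => ?_
    rw [← (T.inner_decomp hf a b u).1, ← (T.inner_decomp hf a' b' u).1, h]
  · refine ext_inner_left ℂ fun u => ?_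
    rw [← (T.inner_decomp hf a b u).2, ← (T.inner_decomp hf a' b' u).2, h]

lemma HilbertTensor.isProd_of_dep (T : HilbertTensor H₁ H₂ H) {f : Fin 2 → H₂} {a b : H₁}
    {v : H} (hv : v = T.tmul a (f 0) + T.tmul b (f 1)) (c : ℂ)
    (h : b = c • a ∨ a = c • b) : ∃ x y, v = T.tmul x y := by
  rcases h with h | h
  · refine ⟨a, f 0 + c • f 1, ?_⟩
    rw [hv, h]
    simp [map_add, map_smul, LinearMap.smul_apply]
  · refine ⟨b, c • f 0 + f 1, ?_⟩
    rw [hv, h]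
    simp [map_add, map_smul, LinearMap.smul_apply]

lemma HilbertTensor.map_decomp (T : HilbertTensor H₁ H₂ H) (A : H₁ →L[ℂ] H₁)
    (B : H₂ →L[ℂ] H₂) (a b : H₁) (f : Fin 2 → H₂) :
    T.map A B (T.tmul a (f 0) + T.tmul b (f 1)) =
      T.tmul (A a) (B (f 0)) + T.tmul (A b) (B (f 1)) := by
  rw [map_add, T.map_tmul, T.map_tmul]

lemma HilbertTensor.cond1_of_notProd (h₁ : Module.finrank ℂ H₁ = 2)
    (h₂ : Module.finrank ℂ H₂ = 2) (T : HilbertTensor H₁ H₂ H) (v : H)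
    (hent : ¬ ∃ x y, v = T.tmul x y) :
    ∀ u : H₁, u ≠ 0 → T.map (projSpan u) 1 v ≠ 0 := by
  haveI : FiniteDimensional ℂ H₁ := .of_finrank_eq_succ h₁
  haveI : FiniteDimensional ℂ H₂ := .of_finrank_eq_succ h₂
  obtain ⟨f, hf⟩ : ∃ f : Fin 2 → H₂, Orthonormal ℂ f :=
    ⟨_, ((stdOrthonormalBasis ℂ H₂).reindex (finCongr h₂)).orthonormal⟩
  obtain ⟨a, b, hv⟩ := T.exists_decomp (spanning_of_orthonormal h₂ hf) v
  intro u hu h0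
  rw [hv, T.map_decomp] at h0
  simp only [ContinuousLinearMap.one_apply] at h0
  have h00 : T.tmul (projSpan u a) (f 0) + T.tmul (projSpan u b) (f 1)
      = T.tmul (0 : H₁) (f 0) + T.tmul (0 : H₁) (f 1) := by
    rw [h0]
    simp [LinearMap.map_zero₂]
  obtain ⟨hpa, hpb⟩ := T.decomp_unique hf h00
  obtain ⟨c, hdep⟩ := dep_of_inner_eq_zero h₁ hu ((projSpan_eq_zero_iff hu a).mp hpa)
    ((projSpan_eq_zero_iff hu b).mp hpb)
  exact hent (T.isProd_of_dep hv c hdep)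

lemma HilbertTensor.notProd_of_cond1 (h₁ : Module.finrank ℂ H₁ = 2)
    (T : HilbertTensor H₁ H₂ H) (v : H)
    (hc : ∀ u : H₁, u ≠ 0 → T.map (projSpan u) 1 v ≠ 0) :
    ¬ ∃ x y, v = T.tmul x y := by
  rintro ⟨x, y, rfl⟩
  obtain ⟨u, hu, hux⟩ := exists_inner_eq_zero h₁ x
  apply hc u hu
  rw [T.map_tmul, projSpan_eq_zero x hux]
  simp [LinearMap.map_zero₂]

lemma HilbertTensor.maxCorrSndFst_of_notProd (h₁ : Module.finrank ℂ H₁ = 2)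
    (h₂ : Module.finrank ℂ H₂ = 2) (T : HilbertTensor H₁ H₂ H) (v : H)
    (hent : ¬ ∃ x y, v = T.tmul x y) : T.MaxCorrSndFst v := by
  haveI : FiniteDimensional ℂ H₁ := .of_finrank_eq_succ h₁
  intro P' hP' hP'0 ε hε
  obtain ⟨x₀, hx₀⟩ : ∃ x, P' x ≠ 0 := by
    by_contra h
    push_neg at h
    exact hP'0 (ContinuousLinearMap.ext fun x => by simp [h x])
  set w := P' x₀ with hwdef
  have hw0 : w ≠ 0 := hx₀
  have hPw : P' w = w := by
    have h2 := ContinuousLinearMap.ext_iff.mp hP'.2 x₀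
    simpa [ContinuousLinearMap.comp_apply] using h2
  obtain ⟨u', hu', hu'w⟩ := exists_inner_eq_zero h₂ w
  have hwu' : ⟪w, u'⟫_ℂ = 0 := inner_eq_zero_symm.mp hu'w
  set g : Fin 2 → H₂ := ![(‖w‖ : ℂ)⁻¹ • w, (‖u'‖ : ℂ)⁻¹ • u'] with hgdef
  have hg : Orthonormal ℂ g := by
    rw [hgdef]
    exact orthonormal_pair hw0 hu' hwu'
  have hg0 : g 0 = (‖w‖ : ℂ)⁻¹ • w := by rw [hgdef]; simp
  obtain ⟨a, b, hv⟩ := T.exists_decomp (spanning_of_orthonormal h₂ hg) v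
  obtain ⟨u, hu, hub⟩ := exists_inner_eq_zero h₁ b
  have hua : ⟪u, a⟫_ℂ ≠ 0 := by
    intro h
    obtain ⟨c, hdep⟩ := dep_of_inner_eq_zero h₁ hu h hub
    exact hent (T.isProd_of_dep hv c hdep)
  have hPb : projSpan u b = 0 := projSpan_eq_zero b hub
  have hP'g0 : P' (g 0) = g 0 := by
    rw [hg0, map_smul, hPw]
  have hg00 : ⟪g 0, g 0⟫_ℂ = 1 := by
    simpa using orthonormal_iff_ite.mp hg 0 0
  have hg10 : ⟪g 1, g 0⟫_ℂ = 0 := by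
    simpa using orthonormal_iff_ite.mp hg 1 0
  have hmap1 : T.map (projSpan u) 1 v = T.tmul (projSpan u a) (g 0) := by
    rw [hv, T.map_decomp]
    simp [hPb, LinearMap.map_zero₂]
  have hmapP : T.map (projSpan u) P' v = T.tmul (projSpan u a) (g 0) := by
    rw [hv, T.map_decomp, hPb, hP'g0]
    simp [LinearMap.map_zero₂]
  have hinner : ⟪v, T.tmul (projSpan u a) (g 0)⟫_ℂ = ⟪a, projSpan u a⟫_ℂ := by
    rw [hv, inner_add_left, T.inner_tmul, T.inner_tmul, hg00, hg10]
    ring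
  have hrepos : 0 < (⟪a, projSpan u a⟫_ℂ).re := by
    rw [projSpan_apply, inner_smul_right, ← inner_conj_symm a u, div_mul_eq_mul_div,
      Complex.mul_conj, ← Complex.ofReal_div, Complex.ofReal_re]
    exact div_pos (Complex.normSq_pos.mpr hua) (pow_pos (norm_pos_iff.mpr hu) 2)
  refine ⟨projSpan u, projSpan_isONProj u, projSpan_ne_zero hu, ?_, ?_⟩
  · rw [hmap1, hinner]
    exact hrepos
  · rw [hmap1, hmapP, hinner]
    nlinarith [mul_pos hε hrepos]

end TensorAux

/-- for `H₁`, `H₂` two-dimensional and `v ∈ H₁ ⊗ H₂` a unit vector, `v` is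
entangled (not a product vector) iff neither reduced density operator of `v` has `0` as an
eigenvalue, i.e. `(P_u ⊗ I) v ≠ 0` for all nonzero `u ∈ H₁` and `(I ⊗ P_w) v ≠ 0` for all
nonzero `w ∈ H₂`; consequently every entangled unit vector of two two-dimensional factors is
hyperentangled. -/
theorem entangled_iff_no_zero_eigenvalue_and_hyper_of_dim_two
    (h₁ : Module.finrank ℂ H₁ = 2) (h₂ : Module.finrank ℂ H₂ = 2)
    (T : HilbertTensor H₁ H₂ H) (v : H) (hv : ‖v‖ = 1) :
    ((¬ ∃ (x : H₁) (y : H₂), v = T.tmul x y) ↔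
      ((∀ u : H₁, u ≠ 0 → T.map (projSpan u) 1 v ≠ 0) ∧
       (∀ w : H₂, w ≠ 0 → T.map 1 (projSpan w) v ≠ 0))) ∧
    ((¬ ∃ (x : H₁) (y : H₂), v = T.tmul x y) → T.Hyper₂ v) := by
  have hent_flip : (¬ ∃ (x : H₁) (y : H₂), v = T.tmul x y) →
      ¬ ∃ (x : H₂) (y : H₁), v = T.flip.tmul x y := by
    rintro hent ⟨x, y, h⟩
    exact hent ⟨y, x, h⟩
  constructor
  · constructor
    · intro hent
      refine ⟨T.cond1_of_notProd h₁ h₂ v hent, ?_⟩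
      intro w hw
      exact T.flip.cond1_of_notProd h₂ h₁ v (hent_flip hent) w hw
    · rintro ⟨hc1, -⟩
      exact T.notProd_of_cond1 h₁ v hc1
  · intro hent
    exact ⟨T.maxCorrSndFst_of_notProd h₁ h₂ v hent,
      T.flip.maxCorrSndFst_of_notProd h₂ h₁ v (hent_flip hent)⟩

end
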